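/- Let E : ℝ → ℝ be continuously differentiable, satisfy the Kneser difference equation E(x+1) = Real.exp (E x) for all x ≥ 0, tend to +∞ as x → +∞, and have deriv E x > 0 for all sufficiently large x. Then deriv E (x+1) = E(x+1) · deriv E x for all x ≥ 0, and E(x) / deriv E x → 0 as x → +∞ (so E'(x) > E(x) for all sufficiently large x). -/

import Mathlib

open Filter

/-- For a `C¹` solution of the Kneser difference equation tending to `+∞`
with eventually positive derivative: `E' (x+1) = E (x+1) * E' x` for `x ≥ 0`,
and `E x / E' x → 0` (so `E' x > E x` eventually). -/
theorem kneser_deriv_difference_equation (E : ℝ → ℝ)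
    (hE : ContDiff ℝ 1 E)
    (hK : ∀ x : ℝ, 0 ≤ x → E (x + 1) = Real.exp (E x))
    (htop : Tendsto E atTop atTop)
    (hpos : ∀ᶠ x : ℝ in atTop, 0 < deriv E x) :
    (∀ x : ℝ, 0 ≤ x → deriv E (x + 1) = E (x + 1) * deriv E x) ∧
      Tendsto (fun x : ℝ => E x / deriv E x) atTop (nhds 0) ∧
      ∀ᶠ x : ℝ in atTop, E x < deriv E x := by
  have hd : Differentiable ℝ E := hE.differentiable one_ne_zero
  -- Part 1: differentiate the functional equation on `Ici 0`
  have part1 : ∀ x : ℝ, 0 ≤ x → deriv E (x + 1) = E (x + 1) * deriv E x := by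
    intro x hx
    have hf : HasDerivAt (fun y : ℝ => E (y + 1)) (deriv E (x + 1)) x := by
      simpa [Function.comp_def] using (hd (x + 1)).hasDerivAt.comp x ((hasDerivAt_id x).add_const 1)
    have hg : HasDerivAt (fun y : ℝ => Real.exp (E y)) (Real.exp (E x) * deriv E x) x :=
      (Real.hasDerivAt_exp (E x)).comp x (hd x).hasDerivAt
    have hg' : HasDerivWithinAt (fun y : ℝ => E (y + 1)) (Real.exp (E x) * deriv E x)
        (Set.Ici 0) x :=
      hg.hasDerivWithinAt.congr (fun y hy => hK y hy) (hK x hx)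
    have hu : UniqueDiffWithinAt ℝ (Set.Ici (0:ℝ)) x := uniqueDiffOn_Ici 0 x hx
    have := (hf.hasDerivWithinAt.derivWithin hu).symm.trans (hg'.derivWithin hu)
    rw [this, hK x hx]
  -- choose a threshold N ≥ 0 beyond which E' > 0 and E ≥ 2
  obtain ⟨N₀, hN₀⟩ := eventually_atTop.mp (hpos.and (htop.eventually_ge_atTop 2))
  set N : ℝ := max N₀ 0 with hNdef
  have hN0 : (0:ℝ) ≤ N := le_max_right _ _
  have hNprop : ∀ y : ℝ, N ≤ y → 0 < deriv E y ∧ 2 ≤ E y := fun y hy =>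
    hN₀ y (le_trans (le_max_left _ _) hy)
  have hcont : Continuous (deriv E) := hE.continuous_deriv le_rfl
  obtain ⟨x₀, hx₀mem, hx₀min⟩ :=
    (isCompact_Icc (a := N) (b := N + 1)).exists_isMinOn
      (Set.nonempty_Icc.2 (by linarith)) hcont.continuousOn
  set m : ℝ := deriv E x₀ with hmdef
  have hm : 0 < m := (hNprop x₀ hx₀mem.1).1
  have key : ∀ n : ℕ, ∀ x ∈ Set.Icc N (N + 1), m * 2 ^ n ≤ deriv E (x + n) := by
    intro n
    induction n with
    | zero => intro x hx; simpa using hx₀min hx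
    | succ n ih =>
      intro x hx
      have hxN : N ≤ x := hx.1
      have hn0 : (0:ℝ) ≤ (n:ℝ) := Nat.cast_nonneg n
      have hxn : (0:ℝ) ≤ x + n := by linarith
      have heq : deriv E (x + (n + 1 : ℕ)) = E (x + n + 1) * deriv E (x + n) := by
        have h := part1 (x + n) hxn
        push_cast
        rw [← add_assoc]
        exact h
      have hE2 : 2 ≤ E (x + n + 1) := (hNprop (x + n + 1) (by linarith)).2
      have hih := ih x hx
      have hpos' : 0 < deriv E (x + n) := lt_of_lt_of_le (by positivity) hih
      rw [heq]
      calc m * 2 ^ (n + 1) = 2 * (m * 2 ^ n) := by ring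
        _ ≤ 2 * deriv E (x + n) := by nlinarith
        _ ≤ E (x + n + 1) * deriv E (x + n) := by nlinarith
  -- deriv E tends to atTop
  have derivTop : Tendsto (deriv E) atTop atTop := by
    have hlb : Tendsto (fun y : ℝ => m * (2:ℝ) ^ (y - N - 1)) atTop atTop := by
      apply Tendsto.const_mul_atTop hm
      have h2 : Tendsto (fun y : ℝ => (2:ℝ) ^ y) atTop atTop := by
        simp only [Real.rpow_def_of_pos (by norm_num : (0:ℝ) < 2)]
        exact Real.tendsto_exp_atTop.comp
          ((tendsto_const_mul_atTop_of_pos (Real.log_pos one_lt_two)).2 tendsto_id)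
      exact h2.comp (tendsto_atTop_add_const_right _ (-N - 1) (tendsto_id (α := ℝ)) |>.congr
        (fun y => by simp only [id_eq]; ring))
    refine tendsto_atTop_mono' atTop ?_ hlb
    filter_upwards [eventually_ge_atTop N] with y hy
    set n : ℕ := ⌊y - N⌋₊ with hn
    have hyN : (0:ℝ) ≤ y - N := by linarith
    have hn1 : (n:ℝ) ≤ y - N := Nat.floor_le hyN
    have hn2 : y - N < n + 1 := Nat.lt_floor_add_one _
    have hxmem : y - n ∈ Set.Icc N (N + 1) := ⟨by linarith, by linarith⟩
    have hk := key n (y - n) hxmem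
    rw [sub_add_cancel] at hk
    refine le_trans ?_ hk
    have h2n : (2:ℝ) ^ (y - N - 1) ≤ (2:ℝ) ^ (n:ℝ) :=
      Real.rpow_le_rpow_of_exponent_le one_le_two (by linarith)
    rw [Real.rpow_natCast] at h2n
    nlinarith
  -- the ratio tends to 0
  have hratio : Tendsto (fun x : ℝ => E x / deriv E x) atTop (nhds 0) := by
    have hshift : Tendsto (fun x : ℝ => deriv E (x - 1)) atTop atTop :=
      derivTop.comp (tendsto_atTop_add_const_right _ (-1) (tendsto_id (α := ℝ)) |>.congr
        (fun y => by simp only [id_eq]; ring))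
    refine hshift.inv_tendsto_atTop.congr' ?_
    filter_upwards [eventually_ge_atTop (max (N + 1) 1)] with x hx
    have hx1 : (0:ℝ) ≤ x - 1 := by
      have := le_trans (le_max_right (N + 1) 1) hx; linarith
    have hxN : N ≤ x := by have := le_trans (le_max_left (N + 1) 1) hx; linarith
    have hp1 := part1 (x - 1) hx1
    rw [sub_add_cancel] at hp1
    have hEx : 0 < E x := lt_of_lt_of_le (by norm_num) (hNprop x hxN).2
    simp only [Pi.inv_apply]
    rw [hp1, div_mul_eq_div_div, div_self (ne_of_gt hEx), one_div]
  refine ⟨part1, hratio, ?_⟩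
  filter_upwards [hratio.eventually (gt_mem_nhds one_pos), hpos] with x h1 h2
  exact (div_lt_one h2).mp h1
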